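/- arXiv:1005.1402 — 5 statements merged into one kernel-verified Lean document; each statement's English description precedes it below -/
import Mathlib

section
/- Let y : Fin 4 → ℝ have all components positive, set G(y) = y₁y₂y₃y₄, gᵢⱼ(y) = (1 − 2δᵢⱼ)·√(G(y))/(8·yᵢ·yⱼ), and g^{jk}(y) = 2·(1 − 2δ_{jk})·yⱼ·y_k/√(G(y)). Then the 4×4 matrix (g^{jk}) is the inverse of the 4×4 matrix (gᵢⱼ): for all i, k ∈ {1,2,3,4}, ∑_{m=1}^{4} gᵢₘ(y)·g^{mk}(y) = δᵢᵏ. -/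
open scoped BigOperators

/-- Kronecker delta on `Fin 4`, valued in `ℝ`. -/
noncomputable def kd (i j : Fin 4) : ℝ := if i = j then 1 else 0

/-- The product `G(y) = y₁·y₂·y₃·y₄`. -/
noncomputable def Gfun (y : Fin 4 → ℝ) : ℝ := y 0 * y 1 * y 2 * y 3

/-- Partial derivative of `f` with respect to the `i`-th coordinate at `y`. -/
noncomputable def pd (f : (Fin 4 → ℝ) → ℝ) (i : Fin 4) (y : Fin 4 → ℝ) : ℝ :=
  fderiv ℝ f y (Pi.single i 1)

/-- Fundamental metrical tensor of the Berwald-Moór metric. -/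
noncomputable def gBM (y : Fin 4 → ℝ) (i j : Fin 4) : ℝ :=
  (1 - 2 * kd i j) * Real.sqrt (Gfun y) / (8 * y i * y j)

/-- Inverse of the fundamental metrical tensor of the Berwald-Moór metric. -/
noncomputable def gBMinv (y : Fin 4 → ℝ) (j k : Fin 4) : ℝ :=
  2 * (1 - 2 * kd j k) * y j * y k / Real.sqrt (Gfun y)

/-- The constants `A^i_{jk}`. -/
noncomputable def Acoef (i j k : Fin 4) : ℝ :=
  (2 * kd i j + 2 * kd i k + 2 * kd j k - 8 * kd i j * kd j k - 1) / 8

/-- Vertical Cartan coefficients `C^i_{jk}(y) = A^i_{jk}·yᵢ/(yⱼ·y_k)`. -/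
noncomputable def CBM (y : Fin 4 → ℝ) (i j k : Fin 4) : ℝ :=
  Acoef i j k * y i / (y j * y k)

lemma gBM_mul (y : Fin 4 → ℝ) (hy : ∀ i, 0 < y i) (i m k : Fin 4) :
    gBM y i m * gBMinv y m k
      = (1 - 2 * kd i m) * (1 - 2 * kd m k) * (y k / (4 * y i)) := by
  have hG : 0 < Gfun y := by
    unfold Gfun; have := hy 0; have := hy 1; have := hy 2; have := hy 3; positivity
  have hs : 0 < Real.sqrt (Gfun y) := Real.sqrt_pos.mpr hG
  have hsq : Real.sqrt (Gfun y) * Real.sqrt (Gfun y) = Gfun y := Real.mul_self_sqrt hG.le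
  have hi := (hy i).ne'
  have hm := (hy m).ne'
  have hk := (hy k).ne'
  unfold gBM gBMinv
  field_simp
  ring

lemma kd_sum (i k : Fin 4) :
    ∑ m, (1 - 2 * kd i m) * (1 - 2 * kd m k) = 4 * kd i k := by
  fin_cases i <;> fin_cases k <;> simp [kd, Fin.sum_univ_four] <;> norm_num

/-- the matrix (g^{jk}) is inverse to (g_{ij}). -/
theorem berwald_moor_metric_inverse
    (y : Fin 4 → ℝ) (hy : ∀ i, 0 < y i) (i k : Fin 4) :
    ∑ m, gBM y i m * gBMinv y m k = kd i k := by
  have hi := (hy i).ne'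
  calc ∑ m, gBM y i m * gBMinv y m k
      = (∑ m, (1 - 2 * kd i m) * (1 - 2 * kd m k)) * (y k / (4 * y i)) := by
        rw [Finset.sum_mul]
        exact Finset.sum_congr rfl fun m _ => gBM_mul y hy i m k
    _ = 4 * kd i k * (y k / (4 * y i)) := by rw [kd_sum]
    _ = kd i k := by
        by_cases h : i = k
        · subst h; simp only [kd, if_pos rfl]; field_simp
        · simp [kd, h]
end

section
/- Let y : Fin 4 → ℝ have all components positive, gᵢⱼ(y) = (1 − 2δᵢⱼ)·√(y₁y₂y₃y₄)/(8·yᵢ·yⱼ), g^{jk}(y) = 2·(1 − 2δ_{jk})·yⱼ·y_k/√(y₁y₂y₃y₄), and define for each i, j, k the vertical Cartan coefficient C^{i}_{jk}(y) := (1/2)·∑_{m=1}^{4} g^{im}(y)·(∂g_{jm}/∂y_k(y) + ∂g_{km}/∂y_j(y) − ∂g_{jk}/∂y_m(y)). Then C^{i}_{jk}(y) = A^{i}_{jk}·yᵢ/(yⱼ·y_k), where A^{i}_{jk} := (2δ^{i}_{j} + 2δ^{i}_{k} + 2δ_{jk} − 8δ^{i}_{j}δ_{jk} − 1)/8 (no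 summation over i, j, k). -/
set_option maxHeartbeats 1600000000

open scoped BigOperators

/-- Partial derivatives of the Berwald-Moór fundamental tensor. -/
lemma pd_gBM (y : Fin 4 → ℝ) (hy : ∀ i, 0 < y i) (a b c : Fin 4) :
    pd (fun z => gBM z a b) c y
      = (1 - 2 * kd a b) / 8 * Real.sqrt (Gfun y) / (y a * y b) *
        (1 / (2 * y c) - kd a c / y a - kd b c / y b) := by
  have hG : 0 < Gfun y := by
    have := hy 0; have := hy 1; have := hy 2; have := hy 3
    unfold Gfun; positivity
  have hproj : ∀ m : Fin 4, HasFDerivAt (𝕜 := ℝ) (fun z : Fin 4 → ℝ => z m)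
      (ContinuousLinearMap.proj m) y := fun m => hasFDerivAt_apply m y
  have hGfun : HasFDerivAt (𝕜 := ℝ) Gfun
      ((y 0 * y 1 * y 2) • ContinuousLinearMap.proj 3 +
        (y 3 : ℝ) • ((y 0 * y 1) • ContinuousLinearMap.proj 2 +
          (y 2 : ℝ) • ((y 0 : ℝ) • ContinuousLinearMap.proj 1 +
            (y 1 : ℝ) • ContinuousLinearMap.proj 0))) y :=
    (((hproj 0).mul (hproj 1)).mul (hproj 2)).mul (hproj 3)
  have hs := (hGfun.sqrt hG.ne').const_mul (1 - 2 * kd a b)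
  have hden := ((hproj a).const_mul (8 : ℝ)).mul (hproj b)
  have hdne : 8 * y a * y b ≠ 0 := by
    have := hy a; have := hy b; positivity
  have hinv := (hasDerivAt_inv hdne).comp_hasFDerivAt y hden
  have hdiv := hs.mul hinv
  simp only [Function.comp_def, Pi.mul_def] at hdiv
  have hfd : pd (fun z => gBM z a b) c y
      = fderiv ℝ (fun z => gBM z a b) y (Pi.single c 1) := rfl
  rw [hfd]
  have heq : (fun z : Fin 4 → ℝ => gBM z a b)
      = fun z => (1 - 2 * kd a b) * Real.sqrt (Gfun z) * (8 * z a * z b)⁻¹ := by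
    funext z; simp [gBM, div_eq_mul_inv]
  rw [heq, hdiv.fderiv]
  have hs0 : Real.sqrt (Gfun y) ≠ 0 := Real.sqrt_ne_zero'.2 hG
  have hss : Real.sqrt (Gfun y) * Real.sqrt (Gfun y) = y 0 * y 1 * y 2 * y 3 :=
    Real.mul_self_sqrt hG.le
  have h0 := (hy 0).ne'; have h1 := (hy 1).ne'; have h2 := (hy 2).ne'
  have h3 := (hy 3).ne'; have ha := (hy a).ne'; have hb := (hy b).ne'
  have hc := (hy c).ne'
  simp only [ContinuousLinearMap.smul_apply, ContinuousLinearMap.add_apply,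
    ContinuousLinearMap.sub_apply, ContinuousLinearMap.coe_smul', Pi.smul_apply,
    ContinuousLinearMap.proj_apply, Pi.single_apply, smul_eq_mul, kd]
  clear hproj hGfun hs hden hinv hdiv heq hfd hdne hy
  split_ifs <;> subst_vars <;>
    first
      | omega
      | (field_simp
         ring_nf
         rw [Real.sq_sqrt hG.le]
         unfold Gfun
         ring)

/-- the vertical Cartan coefficients equal A^i_{jk}·yᵢ/(yⱼ·y_k). -/
theorem berwald_moor_vertical_cartan
    (y : Fin 4 → ℝ) (hy : ∀ i, 0 < y i) (i j k : Fin 4) :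
    (1 / 2) * ∑ m, gBMinv y i m *
        (pd (fun z => gBM z j m) k y + pd (fun z => gBM z k m) j y
          - pd (fun z => gBM z j k) m y)
      = Acoef i j k * y i / (y j * y k) := by
  have hG : 0 < Gfun y := by
    have := hy 0; have := hy 1; have := hy 2; have := hy 3
    unfold Gfun; positivity
  have hs0 : Real.sqrt (Gfun y) ≠ 0 := Real.sqrt_ne_zero'.2 hG
  have h0 := (hy 0).ne'; have h1 := (hy 1).ne'; have h2 := (hy 2).ne'
  have h3 := (hy 3).ne'
  rw [Fin.sum_univ_four]
  simp only [pd_gBM y hy, gBMinv, Acoef, kd]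
  have hi : i = 0 ∨ i = 1 ∨ i = 2 ∨ i = 3 := by omega
  have hj : j = 0 ∨ j = 1 ∨ j = 2 ∨ j = 3 := by omega
  have hk : k = 0 ∨ k = 1 ∨ k = 2 ∨ k = 3 := by omega
  rcases hi with rfl|rfl|rfl|rfl <;> rcases hj with rfl|rfl|rfl|rfl <;>
      rcases hk with rfl|rfl|rfl|rfl <;>
    (simp (config := { decide := true }) only [reduceIte]
     try norm_num
     try field_simp
     try ring)
end

section
/- Let y : Fin 4 → ℝ have all components positive and define C^{i}_{jk}(y) := A^{i}_{jk}·yᵢ/(yⱼ·y_k), where A^{i}_{jk} = (2δ^{i}_{j} + 2δ^{i}_{k} + 2δ_{jk} − 8δ^{i}_{j}δ_{jk} − 1)/8. Then the contraction of C with y vanishes: ∑_{m=1}^{4} C^{i}_{jm}(y)·yₘ = 0 for all i, j ∈ {1,2,3,4}. -/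
open scoped BigOperators

/-- the contraction of C with y vanishes. -/
theorem berwald_moor_C_contraction
    (y : Fin 4 → ℝ) (hy : ∀ i, 0 < y i) (i j : Fin 4) :
    ∑ m, CBM y i j m * y m = 0 := by
  
  have h : ∀ k, y k ≠ 0 := fun k => (hy k).ne'
  have hA : ∑ m, Acoef i j m = 0 := by
    have h1 : ∑ m : Fin 4, kd i m = 1 := by simp [kd, Finset.sum_ite_eq]
    have h2 : ∑ m : Fin 4, kd j m = 1 := by simp [kd, Finset.sum_ite_eq]
    simp only [Acoef, Finset.sum_div, ← Finset.sum_div]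
    rw [div_eq_zero_iff]
    left
    simp only [Finset.sum_sub_distrib, Finset.sum_add_distrib, ← Finset.mul_sum, h1, h2,
      mul_assoc]
    simp
    ring
  calc ∑ m, CBM y i j m * y m = ∑ m, Acoef i j m * (y i / y j) := by
        apply Finset.sum_congr rfl
        intro m _
        field_simp [CBM]
        rw [CBM, div_mul_eq_mul_div, mul_div_mul_right _ _ (h m)]
    _ = 0 := by rw [← Finset.sum_mul, hA, zero_mul]
end

section
/- Let h₁₁ > 0 be a real number with h¹¹ = 1/h₁₁, let y : Fin 4 → ℝ have all components positive, set G(y) = y₁y₂y₃y₄, gᵢⱼ(y) = (1 − 2δᵢⱼ)·√(G(y))/(8·yᵢ·yⱼ), g^{jk}(y) = 2·(1 − 2δ_{jk})·yⱼ·y_k/√(G(y)), ε² = h¹¹·∑_{i,j} gᵢⱼ(y)·yᵢ·yⱼ (which equals h¹¹·√(G(y)) > 0), and define the unit velocity uᵏ = yᵏ/ε with ε = √(ε²). Then for all k, m ∈ {1,2,3,4}: h₁₁·g^{km}(y) − uᵏ·uᵐ = (1 − 4δ^{km})·uᵏ·uᵐ, or equivalently h₁₁·g^{km}(y) = 2·(1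 − 2δ^{km})·uᵏ·uᵐ. -/
open scoped BigOperators

/-- Square of the relativistic factor ε. -/
noncomputable def epsSq (h11 : ℝ) (y : Fin 4 → ℝ) : ℝ :=
  h11⁻¹ * ∑ i, ∑ j, gBM y i j * y i * y j

/-- Unit relativistic velocity uᵏ = yᵏ/ε. -/
noncomputable def uVel (h11 : ℝ) (y : Fin 4 → ℝ) (k : Fin 4) : ℝ :=
  y k / Real.sqrt (epsSq h11 y)

/-- the identity converting the Berwald-Moór stream-line
equations into the coefficient form (1 − 4δ^{km}). -/
theorem berwald_moor_streamline_coeff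
    (h11 : ℝ) (hh : 0 < h11) (y : Fin 4 → ℝ) (hy : ∀ i, 0 < y i) :
    (epsSq h11 y = h11⁻¹ * Real.sqrt (Gfun y) ∧ 0 < epsSq h11 y) ∧
    ∀ k m : Fin 4,
      h11 * gBMinv y k m - uVel h11 y k * uVel h11 y m
          = (1 - 4 * kd k m) * uVel h11 y k * uVel h11 y m ∧
      h11 * gBMinv y k m = 2 * (1 - 2 * kd k m) * uVel h11 y k * uVel h11 y m := by
  have hG : 0 < Gfun y := by
    unfold Gfun; exact mul_pos (mul_pos (mul_pos (hy 0) (hy 1)) (hy 2)) (hy 3)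
  have hs : 0 < Real.sqrt (Gfun y) := Real.sqrt_pos.mpr hG
  have h0 := (hy 0).ne'
  have h1 := (hy 1).ne'
  have h2 := (hy 2).ne'
  have h3 := (hy 3).ne'
  have hterm : ∀ i j : Fin 4, gBM y i j * y i * y j
      = (1 - 2 * kd i j) * Real.sqrt (Gfun y) / 8 := by
    intro i j
    have hi := (hy i).ne'
    have hj := (hy j).ne'
    unfold gBM
    field_simp
  have heps : epsSq h11 y = h11⁻¹ * Real.sqrt (Gfun y) := by
    unfold epsSq
    simp only [hterm, Fin.sum_univ_four, kd, Fin.reduceEq, if_true, if_false,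
      Fin.isValue, reduceIte]
    ring
  have hepspos : 0 < epsSq h11 y := by
    rw [heps]; positivity
  refine ⟨⟨heps, hepspos⟩, fun k m => ?_⟩
  have hse : Real.sqrt (epsSq h11 y) * Real.sqrt (epsSq h11 y) = epsSq h11 y :=
    Real.mul_self_sqrt hepspos.le
  have hu : uVel h11 y k * uVel h11 y m = h11 * (y k * y m) / Real.sqrt (Gfun y) := by
    unfold uVel
    rw [div_mul_div_comm, hse, heps]
    field_simp
  have key : h11 * gBMinv y k m = 2 * (1 - 2 * kd k m) * uVel h11 y k * uVel h11 y m := by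
    unfold gBMinv
    rw [show 2 * (1 - 2 * kd k m) * uVel h11 y k * uVel h11 y m
        = 2 * (1 - 2 * kd k m) * (uVel h11 y k * uVel h11 y m) from by ring, hu]
    field_simp
  exact ⟨by rw [key]; ring, key⟩
end

section
/- Let y : Fin 4 → ℝ have all components positive, set G(y) = y₁y₂y₃y₄, g^{jk}(y) = 2·(1 − 2δ_{jk})·yⱼ·y_k/√(G(y)), and C^{j}_{mp}(y) = A^{j}_{mp}·yⱼ/(yₘ·y_p) with A^{j}_{mp} = (2δ^{j}_{m} + 2δ^{j}_{p} + 2δ_{mp} − 8δ^{j}_{m}δ_{mp} − 1)/8. Then the vertical covariant derivative of the inverse metric with respect to the Cartan canonical connection vanishes: for all j, k, p ∈ {1,2,3,4}, ∂g^{jk}/∂y_p(y) = −∑_{m=1}^{4} g^{mk}(y)·C^{j}_{mp}(y) − ∑_{m=1}^{4} g^{jm}(y)·C^{k}_{mp}(y). -/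
open scoped BigOperators

lemma kd_comm (i j : Fin 4) : kd i j = kd j i := by
  unfold kd; by_cases h : i = j <;> simp [h, Ne.symm, eq_comm]

lemma kd_mul_eq (y : Fin 4 → ℝ) (i j : Fin 4) : kd i j * y i = kd i j * y j := by
  unfold kd; by_cases h : i = j <;> simp [h]

lemma sum_kd_mul (k : Fin 4) (f : Fin 4 → ℝ) : ∑ m, kd m k * f m = f k := by
  simp [kd, ite_mul, Finset.sum_ite_eq']

lemma sum_kd (k : Fin 4) : ∑ m, kd m k = 1 := by
  simpa using sum_kd_mul k (fun _ => 1)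

lemma sumA1 (j p : Fin 4) : ∑ m, Acoef j m p = 0 := by
  unfold Acoef
  rw [← Finset.sum_div, Finset.sum_sub_distrib, Finset.sum_sub_distrib,
    Finset.sum_add_distrib, Finset.sum_add_distrib]
  have h1 : ∑ m : Fin 4, 2 * kd j m = 2 := by
    simp only [kd_comm j]; rw [← Finset.mul_sum, sum_kd]; ring
  have h3 : ∑ m : Fin 4, 2 * kd m p = 2 := by
    rw [← Finset.mul_sum, sum_kd]; ring
  have h4 : ∑ m : Fin 4, 8 * kd j m * kd m p = 8 * kd j p := by
    have h := sum_kd_mul p (fun m => 8 * kd j m)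
    rw [← h]; exact Finset.sum_congr rfl fun m _ => by ring
  rw [h1, h3, h4, Finset.sum_const, Finset.sum_const]
  simp; ring

lemma sumA2 (j k p : Fin 4) : ∑ m, kd m k * Acoef j m p = Acoef j k p :=
  sum_kd_mul k (fun m => Acoef j m p)

lemma kdalg (j k p : Fin 4) :
    2 * (1 - 2 * kd j k) * (kd j p + kd k p) - (1 - 2 * kd j k)
      = 4 * (Acoef j k p + Acoef k j p) := by
  unfold Acoef
  rw [kd_comm k j]
  ring

lemma pd_gBMinv (y : Fin 4 → ℝ) (hy : ∀ i, 0 < y i) (j k p : Fin 4) :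
    pd (fun z => gBMinv z j k) p y
      = 2 * (1 - 2 * kd j k) * (kd j p * y k + kd k p * y j) / Real.sqrt (Gfun y)
        - (1 - 2 * kd j k) * (y j * y k) / (y p * Real.sqrt (Gfun y)) := by
  have hGpos : 0 < Gfun y := mul_pos (mul_pos (mul_pos (hy 0) (hy 1)) (hy 2)) (hy 3)
  have hspos : 0 < Real.sqrt (Gfun y) := Real.sqrt_pos.mpr hGpos
  have hyp := (hy p).ne'
  have hT : (y 0 * y 1 * y 2 * (if (3:Fin 4) = p then (1:ℝ) else 0)) +
      y 3 * ((y 0 * y 1 * if (2:Fin 4) = p then (1:ℝ) else 0) +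
        y 2 * ((y 0 * if (1:Fin 4) = p then (1:ℝ) else 0) +
          y 1 * if (0:Fin 4) = p then (1:ℝ) else 0)) = Gfun y / y p := by
    fin_cases p <;> rw [eq_div_iff (by simpa using hyp)] <;>
      norm_num [Gfun, Fin.ext_iff, show ((3:Fin 4):ℕ) = 3 from rfl,
        show ((2:Fin 4):ℕ) = 2 from rfl, show ((1:Fin 4):ℕ) = 1 from rfl,
        show ((0:Fin 4):ℕ) = 0 from rfl, show ((⟨2, by omega⟩:Fin 4)) = 2 from rfl,
        show ((⟨3, by omega⟩:Fin 4)) = 3 from rfl] <;> ring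
  have hproj : ∀ i : Fin 4, HasFDerivAt (fun z : Fin 4 → ℝ => z i)
      (ContinuousLinearMap.proj (R := ℝ) (φ := fun _ : Fin 4 => ℝ) i) y := fun i =>
    hasFDerivAt_apply i y
  have hG : HasFDerivAt Gfun
      ((y 0 * y 1 * y 2) • ContinuousLinearMap.proj (3 : Fin 4) +
        y 3 • ((y 0 * y 1) • ContinuousLinearMap.proj (2 : Fin 4) +
          y 2 • (y 0 • ContinuousLinearMap.proj (1 : Fin 4) +
            y 1 • ContinuousLinearMap.proj (0 : Fin 4)))) y :=
    (((hproj 0).mul (hproj 1)).mul (hproj 2)).mul (hproj 3)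
  have hs := hG.sqrt (ne_of_gt hGpos)
  have hsinv := (hasDerivAt_inv (ne_of_gt hspos)).comp_hasFDerivAt y hs
  have hnum := (((hproj j).mul (hproj k)).const_mul (2 * (1 - 2 * kd j k)))
  have hf : HasFDerivAt (fun z => gBMinv z j k) _ y :=
    (hnum.mul hsinv).congr_of_eventuallyEq (Filter.Eventually.of_forall fun z => by
      simp only [gBMinv, Function.comp_apply, Pi.mul_apply, div_eq_mul_inv]; ring)
  unfold pd
  rw [hf.fderiv]
  simp only [ContinuousLinearMap.add_apply, ContinuousLinearMap.smul_apply,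
    ContinuousLinearMap.proj_apply, Pi.single_apply, smul_eq_mul,
    Function.comp_apply, Pi.mul_apply, neg_mul, one_div]
  rw [show (if k = p then (1:ℝ) else 0) = kd k p from rfl,
    show (if j = p then (1:ℝ) else 0) = kd j p from rfl, hT, Real.sq_sqrt hGpos.le]
  field_simp
  ring

/-- vertical metricity of the Cartan connection for the
inverse metric: g^{jk}|_{(p)} = 0. -/
theorem berwald_moor_inverse_vertical_metricity
    (y : Fin 4 → ℝ) (hy : ∀ i, 0 < y i) (j k p : Fin 4) :
    pd (fun z => gBMinv z j k) p y
      = -(∑ m, gBMinv y m k * CBM y j m p) - ∑ m, gBMinv y j m * CBM y k m p := by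
  have hGpos : 0 < Gfun y := mul_pos (mul_pos (mul_pos (hy 0) (hy 1)) (hy 2)) (hy 3)
  have hs := (Real.sqrt_pos.mpr hGpos).ne'
  have hyj := (hy j).ne'
  have hyk := (hy k).ne'
  have hyp := (hy p).ne'
  set s := Real.sqrt (Gfun y) with hsdef
  have c := 2 * y j * y k / (s * y p)
  have hsum1 : ∑ m, gBMinv y m k * CBM y j m p
      = -2 * Acoef j k p * (2 * y j * y k / (s * y p)) := by
    have hterm : ∀ m : Fin 4, gBMinv y m k * CBM y j m p
        = ((1 - 2 * kd m k) * Acoef j m p) * (2 * y j * y k / (s * y p)) := fun m => by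
      have hym := (hy m).ne'
      unfold gBMinv CBM
      field_simp
      ring
    rw [Finset.sum_congr rfl fun m _ => hterm m, ← Finset.sum_mul]
    congr 1
    have : ∑ m, (1 - 2 * kd m k) * Acoef j m p
        = (∑ m, Acoef j m p) - 2 * ∑ m, kd m k * Acoef j m p := by
      rw [Finset.mul_sum, ← Finset.sum_sub_distrib]
      exact Finset.sum_congr rfl fun m _ => by ring
    rw [this, sumA1, sumA2]; ring
  have hsum2 : ∑ m, gBMinv y j m * CBM y k m p
      = -2 * Acoef k j p * (2 * y j * y k / (s * y p)) := by
    have hterm : ∀ m : Fin 4, gBMinv y j m * CBM y k m p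
        = ((1 - 2 * kd m j) * Acoef k m p) * (2 * y j * y k / (s * y p)) := fun m => by
      have hym := (hy m).ne'
      unfold gBMinv CBM
      rw [kd_comm j m]
      field_simp
      ring
    rw [Finset.sum_congr rfl fun m _ => hterm m, ← Finset.sum_mul]
    congr 1
    have : ∑ m, (1 - 2 * kd m j) * Acoef k m p
        = (∑ m, Acoef k m p) - 2 * ∑ m, kd m j * Acoef k m p := by
      rw [Finset.mul_sum, ← Finset.sum_sub_distrib]
      exact Finset.sum_congr rfl fun m _ => by ring
    rw [this, sumA1, sumA2]; ring
  rw [pd_gBMinv y hy j k p, hsum1, hsum2, ← hsdef]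
  have key := kdalg j k p
  have e1 : kd j p * y k * y p = kd j p * y j * y k := by
    linear_combination (-(y k)) * kd_mul_eq y j p
  have e2 : kd k p * y j * y p = kd k p * y j * y k := by
    linear_combination (-(y j)) * kd_mul_eq y k p
  have lhs_eq : 2 * (1 - 2 * kd j k) * (kd j p * y k + kd k p * y j) / s
        - (1 - 2 * kd j k) * (y j * y k) / (y p * s)
      = (2 * (1 - 2 * kd j k) * (kd j p + kd k p) - (1 - 2 * kd j k)) * (y j * y k)
          / (y p * s) := by
    rw [div_sub_div _ _ hs (mul_ne_zero hyp hs), div_eq_div_iff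
      (mul_ne_zero hs (mul_ne_zero hyp hs)) (mul_ne_zero hyp hs)]
    linear_combination (2 * (1 - 2 * kd j k) * s * s * y p) * e1
      + (2 * (1 - 2 * kd j k) * s * s * y p) * e2
  rw [lhs_eq, key]
  field_simp
  ring
end
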